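/- Let R = ℂ⟦x,y⟧ with maximal ideal m = ⟨x,y⟩. For every c ∈ m³, the ideal I = ⟨x², xy + c⟩ satisfies dim_ℂ(R/I) ≥ 5 (possibly infinite); in particular dim_ℂ(R/I) ≠ 4. (Equivalently: two power series of order two whose quadratic parts share a common linear factor cannot generate an ideal of colength 4.) -/

import Mathlib

/-- The formal power series ring `R = ℂ⟦x,y⟧`. -/
noncomputable abbrev R2 : Type := MvPowerSeries (Fin 2) ℂ

/-- The variable `x`. -/
noncomputable def Xv : R2 := MvPowerSeries.X 0

/-- The variable `y`. -/
noncomputable def Yv : R2 := MvPowerSeries.X 1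

/-- The maximal ideal `m = ⟨x, y⟩` of `R = ℂ⟦x,y⟧`. -/
noncomputable def mIdeal : Ideal R2 := Ideal.span {Xv, Yv}

open MvPowerSeries Finsupp in
/-- total degree of an exponent -/
def degT (d : Fin 2 →₀ ℕ) : ℕ := d 0 + d 1

lemma degT_add (a b : Fin 2 →₀ ℕ) : degT (a + b) = degT a + degT b := by
  simp [degT, Finsupp.add_apply]; ring

lemma fin2_ext {d e : Fin 2 →₀ ℕ} (h0 : d 0 = e 0) (h1 : d 1 = e 1) : d = e :=
  Finsupp.ext fun i => by fin_cases i <;> assumption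

lemma finsupp_eq_iff (d e : Fin 2 →₀ ℕ) : d = e ↔ (d 0 = e 0 ∧ d 1 = e 1) :=
  ⟨fun h => by rw [h]; exact ⟨rfl, rfl⟩, fun ⟨h0, h1⟩ => fin2_ext h0 h1⟩

lemma ne_of_apply_ne' (d e : Fin 2 →₀ ℕ) (i : Fin 2) (h : d i ≠ e i) : d ≠ e :=
  fun he => h (by rw [he])

/-- The ideal of power series with all coefficients of total degree `< k` zero. -/
noncomputable def Sdeg (k : ℕ) : Ideal R2 where
  carrier := {f | ∀ d, degT d < k → MvPowerSeries.coeff d f = 0}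
  zero_mem' := fun d _ => map_zero _
  add_mem' := fun {a b} ha hb d hd => by rw [map_add, ha d hd, hb d hd, add_zero]
  smul_mem' := fun r f hf d hd => by
    rw [smul_eq_mul, MvPowerSeries.coeff_mul]
    refine Finset.sum_eq_zero fun p hp => ?_
    rw [Finset.HasAntidiagonal.mem_antidiagonal] at hp
    have h2 : degT p.2 < k := by
      have h := degT_add p.1 p.2; rw [hp] at h; omega
    rw [hf p.2 h2, mul_zero]

lemma mem_Sdeg {k : ℕ} {f : R2} :
    f ∈ Sdeg k ↔ ∀ d, degT d < k → MvPowerSeries.coeff d f = 0 := Iff.rfl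

lemma Sdeg_mul_le (a b : ℕ) : Sdeg a * Sdeg b ≤ Sdeg (a + b) := by
  rw [Ideal.mul_le]
  intro f hf g hg
  rw [mem_Sdeg]
  intro d hd
  rw [MvPowerSeries.coeff_mul]
  refine Finset.sum_eq_zero fun p hp => ?_
  rw [Finset.HasAntidiagonal.mem_antidiagonal] at hp
  have hsum : degT p.1 + degT p.2 = degT d := by rw [← degT_add, hp]
  by_cases h1 : degT p.1 < a
  · rw [hf p.1 h1, zero_mul]
  · have h2 : degT p.2 < b := by omega
    rw [hg p.2 h2, mul_zero]

lemma m_le_S1 : mIdeal ≤ Sdeg 1 := by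
  rw [mIdeal, Ideal.span_le]
  intro f hf
  simp only [Set.mem_insert_iff, Set.mem_singleton_iff] at hf
  rw [SetLike.mem_coe, mem_Sdeg]
  intro d hd
  rcases hf with rfl | rfl
  · rw [Xv, MvPowerSeries.coeff_X, if_neg]
    intro h; subst h; simp [degT, Finsupp.single_apply] at hd
  · rw [Yv, MvPowerSeries.coeff_X, if_neg]
    intro h; subst h; simp [degT, Finsupp.single_apply] at hd

lemma m3_le_S3 : mIdeal ^ 3 ≤ Sdeg 3 := by
  have h1 : mIdeal ^ 3 ≤ Sdeg 1 * Sdeg 1 * Sdeg 1 := by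
    have : mIdeal ^ 3 = mIdeal * mIdeal * mIdeal := by ring
    rw [this]
    exact Ideal.mul_mono (Ideal.mul_mono m_le_S1 m_le_S1) m_le_S1
  refine h1.trans ?_
  refine (Ideal.mul_mono_left (Sdeg_mul_le 1 1)).trans ?_
  exact Sdeg_mul_le 2 1

/-- For every `c ∈ m³`, the ideal `I = ⟨x², xy + c⟩` of `R = ℂ⟦x,y⟧`
satisfies `dim_ℂ(R/I) ≥ 5` (possibly infinite); in particular
`dim_ℂ(R/I) ≠ 4`. -/
theorem stmt13 (c : R2) (hc : c ∈ mIdeal ^ 3) :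
    (5 : Cardinal) ≤ Module.rank ℂ (R2 ⧸ Ideal.span {Xv ^ 2, Xv * Yv + c}) ∧
    Module.rank ℂ (R2 ⧸ Ideal.span {Xv ^ 2, Xv * Yv + c}) ≠ 4 := by
  classical
  have hc3 : ∀ d, degT d < 3 → MvPowerSeries.coeff d c = 0 := m3_le_S3 hc
  set I : Ideal R2 := Ideal.span {Xv ^ 2, Xv * Yv + c} with hI
  set mk := Ideal.Quotient.mkₐ ℂ I with hmk
  -- exponents
  set d0 : Fin 2 →₀ ℕ := 0 with hd0
  set dX : Fin 2 →₀ ℕ := Finsupp.single 0 1 with hdX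
  set dY : Fin 2 →₀ ℕ := Finsupp.single 1 1 with hdY
  set dY2 : Fin 2 →₀ ℕ := Finsupp.single 1 2 with hdY2
  set dY3 : Fin 2 →₀ ℕ := Finsupp.single 1 3 with hdY3
  set dXY : Fin 2 →₀ ℕ := Finsupp.single 0 1 + Finsupp.single 1 1 with hdXY
  -- key coefficient computations for elements of I
  have hA : ∀ (u : R2) (d : Fin 2 →₀ ℕ), d 0 ≤ 1 →
      MvPowerSeries.coeff d (u * Xv ^ 2) = 0 := by
    intro u d hd
    rw [Xv, MvPowerSeries.X_pow_eq, MvPowerSeries.coeff_mul_monomial, if_neg]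
    intro hle
    have := Finsupp.single_le_iff.mp hle
    omega
  have hBne : ∀ (v : R2) (d : Fin 2 →₀ ℕ), (d 0 = 0 ∨ d 1 = 0) →
      MvPowerSeries.coeff d (v * (Xv * Yv)) = 0 := by
    intro v d hd
    have hXY : Xv * Yv = MvPowerSeries.monomial dXY 1 := by
      rw [Xv, Yv, MvPowerSeries.X, MvPowerSeries.X,
        MvPowerSeries.monomial_mul_monomial, one_mul, hdXY]
    rw [hXY, MvPowerSeries.coeff_mul_monomial, if_neg]
    intro hle
    have h0 := hle 0
    have h1 := hle 1
    simp [hdXY, Finsupp.single_apply] at h0 h1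
    omega
  have hBxy : ∀ (v : R2),
      MvPowerSeries.coeff dXY (v * (Xv * Yv)) = MvPowerSeries.coeff 0 v := by
    intro v
    have hXY : Xv * Yv = MvPowerSeries.monomial dXY 1 := by
      rw [Xv, Yv, MvPowerSeries.X, MvPowerSeries.X,
        MvPowerSeries.monomial_mul_monomial, one_mul, hdXY]
    rw [hXY, MvPowerSeries.coeff_mul_monomial, if_pos le_rfl]
    simp
  have hClow : ∀ (v : R2) (d : Fin 2 →₀ ℕ), degT d < 3 →
      MvPowerSeries.coeff d (v * c) = 0 := by
    intro v d hd
    have : v * c ∈ Sdeg 3 := (Sdeg 3).smul_mem v (m3_le_S3 hc)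
    exact this d hd
  have hCy3 : ∀ (v : R2),
      MvPowerSeries.coeff dY3 (v * c) =
        MvPowerSeries.coeff 0 v * MvPowerSeries.coeff dY3 c := by
    intro v
    rw [MvPowerSeries.coeff_mul]
    refine Finset.sum_eq_single_of_mem (0, dY3) ?_ ?_
    · rw [Finset.HasAntidiagonal.mem_antidiagonal]; exact zero_add _
    · rintro ⟨p1, p2⟩ hp hne
      rw [Finset.HasAntidiagonal.mem_antidiagonal] at hp
      have e0 : p1 0 + p2 0 = dY3 0 := by rw [← hp]; rfl
      have e1 : p1 1 + p2 1 = dY3 1 := by rw [← hp]; rfl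
      simp only [hdY3, Finsupp.single_apply] at e0 e1
      norm_num at e0 e1
      by_cases h2 : degT p2 < 3
      · rw [hc3 p2 h2, mul_zero]
      · exfalso
        have hp20 : p2 0 = 0 := by omega
        have hp21 : p2 1 = 3 := by simp [degT] at h2 ⊢; omega
        have hp10 : p1 0 = 0 := by omega
        have hp11 : p1 1 = 0 := by omega
        apply hne
        have h1 : p1 = 0 := fin2_ext (by simpa using hp10) (by simpa using hp11)
        have h2' : p2 = dY3 := fin2_ext
          (by simp [hdY3, Finsupp.single_apply, hp20])
          (by simp [hdY3, Finsupp.single_apply, hp21])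
        rw [h1, h2']
  -- for any element w = u x² + v(xy+c) of I:
  have hIcoeff : ∀ w ∈ I,
      MvPowerSeries.coeff d0 w = 0 ∧
      MvPowerSeries.coeff dX w = 0 ∧
      MvPowerSeries.coeff dY w = 0 ∧
      MvPowerSeries.coeff dY2 w = 0 ∧
      MvPowerSeries.coeff dY3 w =
        MvPowerSeries.coeff dXY w * MvPowerSeries.coeff dY3 c := by
    intro w hw
    rw [hI, Ideal.mem_span_pair] at hw
    obtain ⟨u, v, huv⟩ := hw
    have hexp : w = u * Xv ^ 2 + (v * (Xv * Yv) + v * c) := by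
      rw [← huv]; ring
    have key : ∀ d : Fin 2 →₀ ℕ, MvPowerSeries.coeff d w =
        MvPowerSeries.coeff d (u * Xv ^ 2) +
        (MvPowerSeries.coeff d (v * (Xv * Yv)) + MvPowerSeries.coeff d (v * c)) := by
      intro d; rw [hexp, map_add, map_add]
    have hd0v : (d0 : Fin 2 →₀ ℕ) 0 = 0 := rfl
    refine ⟨?_, ?_, ?_, ?_, ?_⟩
    · rw [key, hA u _ (by simp [hd0]), hBne v _ (Or.inl (by simp [hd0])),
        hClow v _ (by simp [degT, hd0]), add_zero, add_zero]
    · rw [key, hA u _ (by simp [hdX, Finsupp.single_apply]),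
        hBne v _ (Or.inr (by simp [hdX, Finsupp.single_apply])),
        hClow v _ (by simp [degT, hdX, Finsupp.single_apply]), add_zero, add_zero]
    · rw [key, hA u _ (by simp [hdY, Finsupp.single_apply]),
        hBne v _ (Or.inl (by simp [hdY, Finsupp.single_apply])),
        hClow v _ (by simp [degT, hdY, Finsupp.single_apply]), add_zero, add_zero]
    · rw [key, hA u _ (by simp [hdY2, Finsupp.single_apply]),
        hBne v _ (Or.inl (by simp [hdY2, Finsupp.single_apply])),
        hClow v _ (by simp [degT, hdY2, Finsupp.single_apply]), add_zero, add_zero]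
    · have h1 : MvPowerSeries.coeff dY3 w =
          MvPowerSeries.coeff 0 v * MvPowerSeries.coeff dY3 c := by
        rw [key, hA u _ (by simp [hdY3, Finsupp.single_apply]),
          hBne v _ (Or.inl (by simp [hdY3, Finsupp.single_apply])), hCy3 v,
          zero_add, zero_add]
      have h2 : MvPowerSeries.coeff dXY w = MvPowerSeries.coeff 0 v := by
        rw [key, hA u _ (by simp [hdXY, Finsupp.single_apply]),
          hBxy v, hClow v _ (by simp [degT, hdXY, Finsupp.single_apply]),
          zero_add, add_zero]
      rw [h1, h2]
  -- linear independence of 1, x, y, y², y³ in the quotient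
  have hli : LinearIndependent ℂ
      ![mk 1, mk Xv, mk Yv, mk (Yv ^ 2), mk (Yv ^ 3)] := by
    rw [Fintype.linearIndependent_iff]
    intro g hg
    set W : R2 := g 0 • (1 : R2) + g 1 • Xv + g 2 • Yv + g 3 • Yv ^ 2 + g 4 • Yv ^ 3
      with hW
    have hmkW : mk W = 0 := by
      rw [hW]
      simp only [map_add, map_smul]
      rw [← hg]
      rw [Fin.sum_univ_five]
      simp [Matrix.cons_val_zero, Matrix.cons_val_one]
    have hWI : W ∈ I := by
      rwa [Ideal.Quotient.mkₐ_eq_mk, ← RingHom.mem_ker, Ideal.mk_ker] at hmkW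
    obtain ⟨e1, e2, e3, e4, e5⟩ := hIcoeff W hWI
    -- coefficients of W
    have hcW : ∀ d : Fin 2 →₀ ℕ, MvPowerSeries.coeff d W =
        g 0 * (if d = 0 then 1 else 0) +
        g 1 * (if d = Finsupp.single 0 1 then 1 else 0) +
        g 2 * (if d = Finsupp.single 1 1 then 1 else 0) +
        g 3 * (if d = Finsupp.single 1 2 then 1 else 0) +
        g 4 * (if d = Finsupp.single 1 3 then 1 else 0) := by
      intro d
      rw [hW]
      simp only [map_add, MvPowerSeries.coeff_smul, Xv, Yv,
        MvPowerSeries.coeff_X_pow, MvPowerSeries.coeff_one, MvPowerSeries.coeff_X]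
    have hg0 : g 0 = 0 := by
      rw [hcW d0] at e1
      simpa [hd0, finsupp_eq_iff, Finsupp.single_apply, Finsupp.add_apply] using e1
    have hg1 : g 1 = 0 := by
      rw [hcW dX] at e2
      simpa [hdX, finsupp_eq_iff, Finsupp.single_apply, Finsupp.add_apply] using e2
    have hg2 : g 2 = 0 := by
      rw [hcW dY] at e3
      simpa [hdY, finsupp_eq_iff, Finsupp.single_apply, Finsupp.add_apply] using e3
    have hg3 : g 3 = 0 := by
      rw [hcW dY2] at e4
      simpa [hdY2, finsupp_eq_iff, Finsupp.single_apply, Finsupp.add_apply] using e4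
    have hg4 : g 4 = 0 := by
      have hXYW : MvPowerSeries.coeff dXY W = 0 := by
        rw [hcW dXY]
        simp [hdXY, finsupp_eq_iff, Finsupp.single_apply, Finsupp.add_apply]
      have hY3W : MvPowerSeries.coeff dY3 W = 0 := by
        rw [e5, hXYW, zero_mul]
      rw [hcW dY3] at hY3W
      simpa [hdY3, finsupp_eq_iff, Finsupp.single_apply, Finsupp.add_apply] using hY3W
    intro i
    fin_cases i <;> assumption
  have h5 : (5 : Cardinal) ≤ Module.rank ℂ (R2 ⧸ I) := by
    have := hli.cardinal_le_rank
    simpa using this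
  refine ⟨h5, ?_⟩
  intro h4
  rw [h4] at h5
  have : ¬ ((5 : Cardinal) ≤ 4) := by
    rw [show ((5 : Cardinal) = ((5 : ℕ) : Cardinal)) by norm_num,
      show ((4 : Cardinal) = ((4 : ℕ) : Cardinal)) by norm_num, Nat.cast_le]
    omega
  exact this h5
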